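/- Let K be an imaginary quadratic field with ring of integers O_K. If {a₁, a₂, a₃, a₄} is a Diophantine quadruple with D(-1) in O_K, then aᵢaⱼ is not a square in O_K for any i ≠ j. -/

import Mathlib

open Complex

/-- every element of K is r + s*w over ℚ -/
lemma aux_repr (K : Subfield ℂ) (hdeg : Module.finrank ℚ K = 2)
    (w : K) (hw : (w:ℂ).im ≠ 0) (z : K) :
    ∃ r s : ℚ, z = (r : K) + (s : K) * w := by
  have fin : FiniteDimensional ℚ K := FiniteDimensional.of_finrank_eq_succ (n := 1) hdeg
  have li : LinearIndependent ℚ ![(1 : K), w] := by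
    rw [LinearIndependent.pair_iff]
    intro s t hst
    have hC : (s : ℂ) + (t : ℂ) * (w : ℂ) = 0 := by
      have := congrArg (Subtype.val) hst
      push_cast [Rat.smul_def] at this ⊢
      simpa using this
    have him : (t : ℝ) * (w : ℂ).im = 0 := by
      have := congrArg Complex.im hC
      simpa using this
    have ht : t = 0 := by
      rcases mul_eq_zero.mp him with h | h
      · exact_mod_cast h
      · exact absurd h hw
    subst ht
    have hs : (s : ℂ) = 0 := by simpa using hC
    exact ⟨by exact_mod_cast hs, rfl⟩
  have hsp : Submodule.span ℚ ({(1 : K), w} : Set K) = ⊤ := by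
    apply Submodule.eq_top_of_finrank_eq
    have := finrank_span_eq_card li
    rw [hdeg]
    rw [show Set.range ![(1:K), w] = {(1:K), w} by
      simp [Matrix.range_cons, Matrix.range_empty, Set.insert_union, Set.pair_comm]] at this
    simpa using this
  have hz : z ∈ Submodule.span ℚ ({(1 : K), w} : Set K) := hsp ▸ Submodule.mem_top
  obtain ⟨r, s, hrs⟩ := Submodule.mem_span_pair.mp hz
  refine ⟨r, s, ?_⟩
  rw [← hrs, Rat.smul_def, Rat.smul_def, mul_one]

/-- real elements of K are rational -/
lemma aux_real_rat (K : Subfield ℂ) (hdeg : Module.finrank ℚ K = 2)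
    (him : ∃ z : K, (z : ℂ).im ≠ 0) (z : K) (hz : (z : ℂ).im = 0) :
    ∃ r : ℚ, z = (r : K) := by
  obtain ⟨w, hw⟩ := him
  obtain ⟨r, s, hrs⟩ := aux_repr K hdeg w hw z
  have hC : (z : ℂ) = (r : ℂ) + (s : ℂ) * (w : ℂ) := by
    rw [hrs]; push_cast; ring
  have : (s : ℝ) * (w : ℂ).im = 0 := by
    have := congrArg Complex.im hC
    rw [hz] at this
    simpa using this.symm
  have hs : s = 0 := by
    rcases mul_eq_zero.mp this with h | h
    · exact_mod_cast h
    · exact absurd h hw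
  exact ⟨r, by rw [hrs, hs]; push_cast; ring⟩

/-- conjugation maps K into K -/
lemma aux_exists_conj (K : Subfield ℂ) (hdeg : Module.finrank ℚ K = 2)
    (him : ∃ z : K, (z : ℂ).im ≠ 0) (z : K) :
    ∃ z' : K, (z' : ℂ) = (starRingEnd ℂ) (z : ℂ) := by
  obtain ⟨w, hw⟩ := him
  obtain ⟨p, q, hpq⟩ := aux_repr K hdeg w hw (w * w)
  -- conj w = q - w
  have hcw : (starRingEnd ℂ) (w : ℂ) = (q : ℂ) - (w : ℂ) := by
    set W : ℂ := (w : ℂ) with hW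
    have h1 : W * W = (p : ℂ) + (q : ℂ) * W := by
      have := congrArg (Subtype.val) hpq
      push_cast at this
      simpa using this
    have h2 : (starRingEnd ℂ) W * (starRingEnd ℂ) W = (p : ℂ) + (q : ℂ) * (starRingEnd ℂ) W := by
      have := congrArg (starRingEnd ℂ) h1
      simpa [map_add, map_mul] using this
    have hne : (starRingEnd ℂ) W - W ≠ 0 := by
      intro h
      have : (starRingEnd ℂ) W = W := by linear_combination h
      rw [Complex.conj_eq_iff_im] at this
      exact hw this
    have key : ((starRingEnd ℂ) W - W) * ((starRingEnd ℂ) W + W - (q : ℂ)) = 0 := by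
      linear_combination h2 - h1
    rcases mul_eq_zero.mp key with h | h
    · exact absurd h hne
    · linear_combination h
  obtain ⟨r, s, hrs⟩ := aux_repr K hdeg w hw z
  refine ⟨(r : K) + (s : K) * ((q : K) - w), ?_⟩
  rw [hrs]
  push_cast
  simp only [map_add, map_mul, hcw, map_ratCast]

/-- integrality transfers between K and ℂ -/
lemma aux_int_coe (K : Subfield ℂ) (z : K) :
    IsIntegral ℤ z ↔ IsIntegral ℤ (z : ℂ) := by
  constructor
  · intro h
    exact h.map K.subtype.toIntAlgHom
  · intro h
    have hinj : Function.Injective (algebraMap K ℂ) := (algebraMap K ℂ).injective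
    have he : algebraMap K ℂ z = (z : ℂ) := rfl
    rw [← he] at h
    exact (isIntegral_algebraMap_iff hinj).mp h

/-- rational integral elements are integers -/
lemma aux_rat_int (K : Subfield ℂ) (r : ℚ) (h : IsIntegral ℤ ((r : ℚ) : K)) :
    ∃ n : ℤ, (n : ℚ) = r := by
  have hinj : Function.Injective (algebraMap ℚ K) := (algebraMap ℚ K).injective
  have : IsIntegral ℤ r := by
    rw [← isIntegral_algebraMap_iff hinj]
    rwa [eq_ratCast (algebraMap ℚ K) r]
  obtain ⟨n, hn⟩ := IsIntegrallyClosed.isIntegral_iff.mp this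
  exact ⟨n, by rwa [eq_intCast] at hn⟩

/-- the norm/trace package: for integral z with conjugate z', produce integers n m with
    z*z' = n, z+z' = m, 0 ≤ n, m² ≤ 4n, and n = 0 → z = 0. -/
lemma aux_nt (K : Subfield ℂ) (hdeg : Module.finrank ℚ K = 2)
    (him : ∃ z : K, (z : ℂ).im ≠ 0) (z z' : K)
    (hcj : (z' : ℂ) = (starRingEnd ℂ) (z : ℂ))
    (hz : IsIntegral ℤ z) (hz' : IsIntegral ℤ z') :
    ∃ n m : ℤ, z * z' = (n : K) ∧ z + z' = (m : K) ∧ 0 ≤ n ∧ m ^ 2 ≤ 4 * n ∧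
      (n = 0 → z = 0) := by
  have hmulC : ((z * z' : K) : ℂ) = (Complex.normSq (z : ℂ) : ℝ) := by
    push_cast
    rw [hcj, Complex.mul_conj]
  have haddC : ((z + z' : K) : ℂ) = 2 * (((z : ℂ).re : ℝ) : ℂ) := by
    push_cast
    rw [hcj, Complex.add_conj]
    push_cast
    ring
  -- norm is a rational, then an integer
  obtain ⟨r₁, hr₁⟩ := aux_real_rat K hdeg him (z * z') (by rw [hmulC]; simp)
  obtain ⟨n, hn⟩ := aux_rat_int K r₁ (by rw [← hr₁]; exact hz.mul hz')
  obtain ⟨r₂, hr₂⟩ := aux_real_rat K hdeg him (z + z') (by rw [haddC]; simp)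
  obtain ⟨m, hm⟩ := aux_rat_int K r₂ (by rw [← hr₂]; exact hz.add hz')
  have hzz : z * z' = (n : K) := by rw [hr₁, ← hn]; push_cast; ring
  have hzm : z + z' = (m : K) := by rw [hr₂, ← hm]; push_cast; ring
  have hnC : (n : ℝ) = Complex.normSq (z : ℂ) := by
    have : ((n : K) : ℂ) = (Complex.normSq (z : ℂ) : ℝ) := by rw [← hzz]; exact hmulC
    rw [show (((n : K) : ℂ)) = ((n : ℝ) : ℂ) by push_cast; ring] at this
    exact_mod_cast this
  have hmC : (m : ℝ) = 2 * (z : ℂ).re := by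
    have : ((m : K) : ℂ) = 2 * (((z : ℂ).re : ℝ) : ℂ) := by rw [← hzm]; exact haddC
    rw [show (((m : K) : ℂ)) = ((m : ℝ) : ℂ) by push_cast; ring] at this
    have : (m : ℝ) = 2 * (z : ℂ).re := by exact_mod_cast this
    exact this
  refine ⟨n, m, hzz, hzm, ?_, ?_, ?_⟩
  · have : (0 : ℝ) ≤ (n : ℝ) := hnC ▸ Complex.normSq_nonneg _
    exact_mod_cast this
  · have : ((m : ℝ)) ^ 2 ≤ 4 * (n : ℝ) := by
      rw [hmC, hnC, Complex.normSq_apply]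
      nlinarith [sq_nonneg ((z:ℂ).im)]
    exact_mod_cast this
  · intro h0
    have : Complex.normSq (z : ℂ) = 0 := by rw [← hnC, h0]; simp
    have : (z : ℂ) = 0 := by rwa [Complex.normSq_eq_zero] at this
    exact_mod_cast Subtype.ext this

/-- integral conjugate -/
lemma aux_conj_int (K : Subfield ℂ) (hdeg : Module.finrank ℚ K = 2)
    (him : ∃ z : K, (z : ℂ).im ≠ 0) (z : K) (hz : IsIntegral ℤ z) :
    ∃ z' : K, (z' : ℂ) = (starRingEnd ℂ) (z : ℂ) ∧ IsIntegral ℤ z' := by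
  obtain ⟨z', h⟩ := aux_exists_conj K hdeg him z
  refine ⟨z', h, ?_⟩
  rw [aux_int_coe, h]
  exact ((aux_int_coe K z).mp hz).map (starRingEnd ℂ).toIntAlgHom

section cj
variable {K : Subfield ℂ}

lemma cj_mul {x y x' y' : K} (hx : (x' : ℂ) = (starRingEnd ℂ) (x : ℂ))
    (hy : (y' : ℂ) = (starRingEnd ℂ) (y : ℂ)) :
    ((x' * y' : K) : ℂ) = (starRingEnd ℂ) ((x * y : K) : ℂ) := by
  push_cast; rw [hx, hy, map_mul]

lemma cj_add {x y x' y' : K} (hx : (x' : ℂ) = (starRingEnd ℂ) (x : ℂ))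
    (hy : (y' : ℂ) = (starRingEnd ℂ) (y : ℂ)) :
    ((x' + y' : K) : ℂ) = (starRingEnd ℂ) ((x + y : K) : ℂ) := by
  push_cast; rw [hx, hy, map_add]

lemma cj_sub {x y x' y' : K} (hx : (x' : ℂ) = (starRingEnd ℂ) (x : ℂ))
    (hy : (y' : ℂ) = (starRingEnd ℂ) (y : ℂ)) :
    ((x' - y' : K) : ℂ) = (starRingEnd ℂ) ((x - y : K) : ℂ) := by
  push_cast; rw [hx, hy, map_sub]

lemma cj_neg {x x' : K} (hx : (x' : ℂ) = (starRingEnd ℂ) (x : ℂ)) :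
    ((-x' : K) : ℂ) = (starRingEnd ℂ) ((-x : K) : ℂ) := by
  push_cast; rw [hx, map_neg]

lemma cj_symm {x x' : K} (hx : (x' : ℂ) = (starRingEnd ℂ) (x : ℂ)) :
    ((x : K) : ℂ) = (starRingEnd ℂ) ((x' : K) : ℂ) := by
  rw [hx, Complex.conj_conj]

lemma cj_int (n : ℤ) : (((n : ℤ) : K) : ℂ) = (starRingEnd ℂ) (((n : ℤ) : K) : ℂ) := by
  push_cast; simp

lemma cj_eq {x y x' y' : K} (hx : (x' : ℂ) = (starRingEnd ℂ) (x : ℂ))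
    (hy : (y' : ℂ) = (starRingEnd ℂ) (y : ℂ)) (h : x = y) : x' = y' := by
  apply Subtype.ext
  rw [hx, hy, h]

end cj

set_option maxHeartbeats 2000000 in
/-- case t = 0 (so b² = -1): any third element d with the two square conditions
    must equal b or c. -/
lemma aux_case_t0 (K : Subfield ℂ) (hdeg : Module.finrank ℚ K = 2)
    (him : ∃ z : K, (z : ℂ).im ≠ 0) (b c d p q : K)
    (hcjb : (c : ℂ) = (starRingEnd ℂ) (b : ℂ))
    (hbint : IsIntegral ℤ b) (hcint : IsIntegral ℤ c)
    (hpint : IsIntegral ℤ p) (hqint : IsIntegral ℤ q)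
    (hbc : b * c = 1) (htr : b + c = 0)
    (hp : p ^ 2 = b * d - 1) (hq : q ^ 2 = c * d - 1) (hd0 : d ≠ 0) :
    d = b ∨ d = c := by
  have hb0 : b ≠ 0 := by intro h; rw [h, zero_mul] at hbc; exact zero_ne_one hbc
  have hc0 : c ≠ 0 := by intro h; rw [h, mul_zero] at hbc; exact zero_ne_one hbc
  have hb2 : b ^ 2 = -1 := by linear_combination b * htr - hbc
  obtain ⟨p', hp', hp'int⟩ := aux_conj_int K hdeg him p hpint
  obtain ⟨q', hq', hq'int⟩ := aux_conj_int K hdeg him q hqint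
  have hcjA : ((p' + c * q' : K) : ℂ) = (starRingEnd ℂ) ((p + b * q : K) : ℂ) :=
    cj_add hp' (cj_mul hcjb hq')
  have hcjB : ((p' - c * q' : K) : ℂ) = (starRingEnd ℂ) ((p - b * q : K) : ℂ) :=
    cj_sub hp' (cj_mul hcjb hq')
  obtain ⟨nA, mA, hAn, hAm, hAnn, hAb, hAz⟩ := aux_nt K hdeg him (p + b * q) (p' + c * q')
    hcjA (hpint.add (hbint.mul hqint)) (hp'int.add (hcint.mul hq'int))
  obtain ⟨nB, mB, hBn, hBm, hBnn, hBb, hBz⟩ := aux_nt K hdeg him (p - b * q) (p' - c * q')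
    hcjB (hpint.sub (hbint.mul hqint)) (hp'int.sub (hcint.mul hq'int))
  have hAB : (p + b * q) * (p - b * q) = ((-2 : ℤ) : K) := by
    push_cast
    linear_combination hp - b ^ 2 * hq - (b * d) * hbc + hb2
  have hAB' : (p' + c * q') * (p' - c * q') = ((-2 : ℤ) : K) :=
    cj_eq (cj_mul hcjA hcjB) (cj_int (-2)) hAB
  have hprod : nA * nB = 4 := by
    have hK : ((nA * nB : ℤ) : K) = ((4 : ℤ) : K) := by
      push_cast
      push_cast at hAB hAB'
      linear_combination (-((p - b*q) * (p' - c*q'))) * hAn - (nA : K) * hBn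
        + ((p' + c*q') * (p' - c*q')) * hAB + (-2 : K) * hAB'
    exact_mod_cast hK
  obtain ⟨np, mp, hpn, hpm, hpnn, hpb, hpz⟩ := aux_nt K hdeg him p p' hp' hpint hp'int
  obtain ⟨nq, mq, hqn, hqm, hqnn, hqb, hqz⟩ := aux_nt K hdeg him q q' hq' hqint hq'int
  have hnB1 : 1 ≤ nB := by
    rcases eq_or_lt_of_le hBnn with h | h
    · rw [← h, mul_zero] at hprod; omega
    · omega
  have hnA1 : 1 ≤ nA := by
    rcases eq_or_lt_of_le hAnn with h | h
    · rw [← h, zero_mul] at hprod; omega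
    · omega
  have hnA4 : nA ≤ 4 := by nlinarith
  -- the two "unit" cases are impossible
  have unitcase : ∀ ε ε' : K, (ε' : ℂ) = (starRingEnd ℂ) (ε : ℂ) → IsIntegral ℤ ε →
      IsIntegral ℤ ε' → ε * ε' = 1 → 2 * p = ε - 2 * ε' → False := by
    intro ε ε' hcjε hεi hε'i hεu h2p
    obtain ⟨nε, s, hεn, hεm, _, hsb, _⟩ := aux_nt K hdeg him ε ε' hcjε hεi hε'i
    have hnε : nε = 1 := by
      have : ((nε : ℤ) : K) = ((1 : ℤ) : K) := by push_cast; rw [← hεn, hεu]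
      exact_mod_cast this
    rw [hnε] at hsb
    have h2p' : 2 * p' = ε' - 2 * ε := by
      refine cj_eq ?_ ?_ h2p
      · have h2 : (((2 : K)) : ℂ) = (starRingEnd ℂ) ((2 : K) : ℂ) := by
          rw [show ((2:K)) = (((2:ℤ)):K) by norm_num]; exact cj_int 2
        exact cj_mul h2 hp'
      · have h2 : (((2 : K)) : ℂ) = (starRingEnd ℂ) ((2 : K) : ℂ) := by
          rw [show ((2:K)) = (((2:ℤ)):K) by norm_num]; exact cj_int 2
        exact cj_sub hcjε (cj_mul h2 (cj_symm hcjε))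
    have hkey : (4 : ℤ) * np = 9 - 2 * s ^ 2 := by
      have hK : (((4 : ℤ) * np : ℤ) : K) = ((9 - 2 * s ^ 2 : ℤ) : K) := by
        push_cast
        linear_combination (2 * p') * h2p + (ε - 2 * ε') * h2p' - 4 * hpn
          + 9 * hεu - 2 * (ε + ε' + (s : K)) * hεm
      exact_mod_cast hK
    have hs0 : 0 ≤ s ^ 2 := sq_nonneg s
    omega
  have hcase : nA = 1 ∨ (nA = 2 ∧ nB = 2) ∨ nB = 1 := by interval_cases nA <;> omega
  rcases hcase with h1 | ⟨h2, h2'⟩ | h3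
  · -- nA = 1 : impossible
    exfalso
    rw [h1] at hAn
    push_cast at hAn
    have hα0 : p + b * q ≠ 0 := by
      intro h; rw [h, zero_mul] at hAn; exact zero_ne_one hAn
    have hβeq : p - b * q = -2 * (p' + c * q') := by
      have h0 : (p + b * q) * ((p - b * q) + 2 * (p' + c * q')) = 0 := by
        push_cast at hAB
        linear_combination hAB + 2 * hAn
      rcases mul_eq_zero.mp h0 with h | h
      · exact absurd h hα0
      · linear_combination h
    exact unitcase (p + b * q) (p' + c * q') hcjA (hpint.add (hbint.mul hqint))
      (hp'int.add (hcint.mul hq'int)) hAn (by linear_combination hβeq)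
  · -- nA = nB = 2
    rw [h2] at hAn; rw [h2'] at hBn
    push_cast at hAn hBn
    have hα0 : p + b * q ≠ 0 := by
      intro h; rw [h, zero_mul] at hAn
      exact two_ne_zero hAn.symm
    have hβ : p - b * q = -(p' + c * q') := by
      have h0 : (p + b * q) * ((p - b * q) + (p' + c * q')) = 0 := by
        push_cast at hAB
        linear_combination hAB + hAn
      rcases mul_eq_zero.mp h0 with h | h
      · exact absurd h hα0
      · linear_combination h
    have hβ' : p' - c * q' = -(p + b * q) := cj_eq hcjB (cj_neg (cj_symm hcjA)) hβ
    have hp'p : p' = -p := by linear_combination ((1:K)/2) * hβ + ((1:K)/2) * hβ'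
    have hQ : b * (q + q') = 0 := by
      linear_combination (-(1:K)/2) * hβ + ((1:K)/2) * hβ' + q' * htr
    have hq'q : q' = -q := by
      rcases mul_eq_zero.mp hQ with h | h
      · exact absurd h hb0
      · linear_combination h
    have hp2 : p ^ 2 = -((np : ℤ) : K) := by linear_combination p * hp'p - hpn
    have hq2 : q ^ 2 = -((nq : ℤ) : K) := by linear_combination q * hq'q - hqn
    have hsum : np + nq = 2 := by
      have hK : ((np + nq : ℤ) : K) = ((2 : ℤ) : K) := by
        push_cast
        push_cast at hp2 hq2
        linear_combination hp2 + hq2 - hp - hq - d * htr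
      exact_mod_cast hK
    have hnp2 : np ≤ 2 := by omega
    interval_cases np
    · -- np = 0 → p = 0 → d = c
      have hp0 : p = 0 := hpz rfl
      right
      have hbd : b * d = b * c := by
        rw [hbc]
        have h := hp; rw [hp0] at h
        linear_combination -h
      exact mul_left_cancel₀ hb0 hbd
    · -- np = 1 → d = 0, contradiction
      exfalso
      push_cast at hp2
      have hbd : b * d = 0 := by linear_combination hp2 - hp
      rcases mul_eq_zero.mp hbd with h | h
      · exact hb0 h
      · exact hd0 h
    · -- np = 2 → q = 0 → d = b
      have hq0 : q = 0 := hqz (by omega)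
      left
      have hcd : c * d = c * b := by
        rw [show c * b = 1 by linear_combination hbc]
        have h := hq; rw [hq0] at h
        linear_combination -h
      exact mul_left_cancel₀ hc0 hcd
  · -- nB = 1 : impossible
    exfalso
    rw [h3] at hBn
    push_cast at hBn
    have hβ0 : p - b * q ≠ 0 := by
      intro h; rw [h, zero_mul] at hBn; exact zero_ne_one hBn
    have hαeq : p + b * q = -2 * (p' - c * q') := by
      have h0 : (p - b * q) * ((p + b * q) + 2 * (p' - c * q')) = 0 := by
        push_cast at hAB
        linear_combination hAB + 2 * hBn
      rcases mul_eq_zero.mp h0 with h | h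
      · exact absurd h hβ0
      · linear_combination h
    exact unitcase (p - b * q) (p' - c * q') hcjB (hpint.sub (hbint.mul hqint))
      (hp'int.sub (hcint.mul hq'int)) hBn (by linear_combination hαeq)

lemma aux_int_step (t s r nq : ℤ) (ht2 : t ^ 2 = 1) (hs : s ^ 2 ≤ 4) (hr : r ^ 2 ≤ 4)
    (hkey : 4 * nq = s * t * r - 2 * s ^ 2 + 7) : s ^ 2 = 1 ∧ r = -(s * t) ∧ nq = 1 := by
  have ht1 : t = 1 ∨ t = -1 := by
    have h0 : (t - 1) * (t + 1) = 0 := by linear_combination ht2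
    rcases mul_eq_zero.mp h0 with h | h
    · left; omega
    · right; omega
  have hs1 : -2 ≤ s := by nlinarith
  have hs2 : s ≤ 2 := by nlinarith
  have hr1 : -2 ≤ r := by nlinarith
  have hr2 : r ≤ 2 := by nlinarith
  rcases ht1 with h | h <;> subst h <;> interval_cases s <;> interval_cases r <;> omega

lemma aux_int_step2 (t s r : ℤ) (ht2 : t ^ 2 = 1) (hs2 : s ^ 2 = 1) (hreq : r = -(s * t))
    (hZ : s = r * t - s) : False := by
  have ht1 : t = 1 ∨ t = -1 := by
    have h0 : (t - 1) * (t + 1) = 0 := by linear_combination ht2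
    rcases mul_eq_zero.mp h0 with h | h
    · left; omega
    · right; omega
  rcases ht1 with h | h <;> subst h <;>
    (have hs0 : s = 0 := by omega) <;> rw [hs0] at hs2 <;> norm_num at hs2

set_option maxHeartbeats 2000000 in
/-- case t² = 1 : any third element d with the two square conditions equals t. -/
lemma aux_case_t1 (K : Subfield ℂ) (hdeg : Module.finrank ℚ K = 2)
    (him : ∃ z : K, (z : ℂ).im ≠ 0) (b c d p q : K) (t : ℤ)
    (hcjb : (c : ℂ) = (starRingEnd ℂ) (b : ℂ))
    (hbint : IsIntegral ℤ b) (hcint : IsIntegral ℤ c)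
    (hpint : IsIntegral ℤ p) (hqint : IsIntegral ℤ q)
    (ht2 : t ^ 2 = 1) (hbc : b * c = 1) (htr : b + c = ((t : ℤ) : K))
    (hp : p ^ 2 = b * d - 1) (hq : q ^ 2 = c * d - 1) :
    d = ((t : ℤ) : K) := by
  have hb0 : b ≠ 0 := by intro h; rw [h, zero_mul] at hbc; exact zero_ne_one hbc
  have hc0 : c ≠ 0 := by intro h; rw [h, mul_zero] at hbc; exact zero_ne_one hbc
  have htK : ((t : ℤ) : K) ^ 2 = 1 := by
    have := congrArg (fun n : ℤ => ((n : ℤ) : K)) ht2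
    push_cast at this
    exact this
  have cj2 : (((2 : K)) : ℂ) = (starRingEnd ℂ) ((2 : K) : ℂ) := by
    rw [show ((2 : K)) = (((2 : ℤ)) : K) by norm_num]; exact cj_int 2
  have hb2 : b ^ 2 = ((t : ℤ) : K) * b - 1 := by linear_combination b * htr - hbc
  have hc2 : c ^ 2 = ((t : ℤ) : K) * c - 1 := by linear_combination c * htr - hbc
  obtain ⟨p', hp', hp'int⟩ := aux_conj_int K hdeg him p hpint
  obtain ⟨q', hq', hq'int⟩ := aux_conj_int K hdeg him q hqint
  have hcjA : ((q' - b * p' : K) : ℂ) = (starRingEnd ℂ) ((q - c * p : K) : ℂ) :=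
    cj_sub hq' (cj_mul (cj_symm hcjb) hp')
  have hcjB : ((q' + b * p' : K) : ℂ) = (starRingEnd ℂ) ((q + c * p : K) : ℂ) :=
    cj_add hq' (cj_mul (cj_symm hcjb) hp')
  obtain ⟨nA, mA, hAn, hAm, hAnn, hAb, hAz⟩ := aux_nt K hdeg him (q - c * p) (q' - b * p')
    hcjA (hqint.sub (hcint.mul hpint)) (hq'int.sub (hbint.mul hp'int))
  obtain ⟨nB, mB, hBn, hBm, hBnn, hBb, hBz⟩ := aux_nt K hdeg him (q + c * p) (q' + b * p')
    hcjB (hqint.add (hcint.mul hpint)) (hq'int.add (hbint.mul hp'int))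
  have hAB : (q - c * p) * (q + c * p) = ((t : ℤ) : K) * c - 2 := by
    linear_combination hq - c ^ 2 * hp - (c * d) * hbc + hc2
  have hRHScj : ((((t : ℤ) : K) * b - 2 : K) : ℂ) =
      (starRingEnd ℂ) ((((t : ℤ) : K) * c - 2 : K) : ℂ) :=
    cj_sub (cj_mul (cj_int t) (cj_symm hcjb)) cj2
  have hAB' : (q' - b * p') * (q' + b * p') = ((t : ℤ) : K) * b - 2 :=
    cj_eq (cj_mul hcjA hcjB) hRHScj hAB
  have hprod : nA * nB = 3 := by
    have hK : ((nA * nB : ℤ) : K) = ((3 : ℤ) : K) := by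
      push_cast
      linear_combination (-((q + c * p) * (q' + b * p'))) * hAn - (nA : K) * hBn
        + ((q' - b * p') * (q' + b * p')) * hAB + (((t : ℤ) : K) * c - 2) * hAB'
        - htK - 2 * (((t : ℤ) : K)) * htr + ((t:ℤ):K)^2 * hbc
    exact_mod_cast hK
  have hnB1 : 1 ≤ nB := by
    rcases eq_or_lt_of_le hBnn with h | h
    · rw [← h, mul_zero] at hprod; omega
    · omega
  have hnA1 : 1 ≤ nA := by
    rcases eq_or_lt_of_le hAnn with h | h
    · rw [← h, zero_mul] at hprod; omega
    · omega
  have hnA3 : nA ≤ 3 := by nlinarith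
  -- extract the unit ε with 2q = ε + (tc-2) ε'
  have hε : ∃ ε ε' : K, (ε' : ℂ) = (starRingEnd ℂ) (ε : ℂ) ∧ IsIntegral ℤ ε ∧
      IsIntegral ℤ ε' ∧ ε * ε' = 1 ∧ 2 * q = ε + (((t : ℤ) : K) * c - 2) * ε' := by
    have hcase : nA = 1 ∨ nB = 1 := by interval_cases nA <;> omega
    rcases hcase with h1 | h1
    · rw [h1] at hAn; push_cast at hAn
      have hA0 : q - c * p ≠ 0 := by
        intro h; rw [h, zero_mul] at hAn; exact zero_ne_one hAn
      have hBeq : q + c * p = (((t : ℤ) : K) * c - 2) * (q' - b * p') := by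
        have h0 : (q - c * p) * ((q + c * p) - (((t : ℤ) : K) * c - 2) * (q' - b * p')) = 0 := by
          linear_combination hAB - (((t : ℤ) : K) * c - 2) * hAn
        rcases mul_eq_zero.mp h0 with h | h
        · exact absurd h hA0
        · linear_combination h
      exact ⟨q - c * p, q' - b * p', hcjA, hqint.sub (hcint.mul hpint),
        hq'int.sub (hbint.mul hp'int), hAn, by linear_combination hBeq⟩
    · rw [h1] at hBn; push_cast at hBn
      have hB0 : q + c * p ≠ 0 := by
        intro h; rw [h, zero_mul] at hBn; exact zero_ne_one hBn
      have hAeq : q - c * p = (((t : ℤ) : K) * c - 2) * (q' + b * p') := by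
        have h0 : (q + c * p) * ((q - c * p) - (((t : ℤ) : K) * c - 2) * (q' + b * p')) = 0 := by
          linear_combination hAB - (((t : ℤ) : K) * c - 2) * hBn
        rcases mul_eq_zero.mp h0 with h | h
        · exact absurd h hB0
        · linear_combination h
      exact ⟨q + c * p, q' + b * p', hcjB, hqint.add (hcint.mul hpint),
        hq'int.add (hbint.mul hp'int), hBn, by linear_combination hAeq⟩
  obtain ⟨ε, ε', hcjε, hεi, hε'i, hεu, h2q⟩ := hε
  have h2q' : 2 * q' = ε' + (((t : ℤ) : K) * b - 2) * ε :=
    cj_eq (cj_mul cj2 hq')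
      (cj_add hcjε (cj_mul hRHScj (cj_symm hcjε))) h2q
  obtain ⟨nε, s, hεn, hεs, _, hsb, _⟩ := aux_nt K hdeg him ε ε' hcjε hεi hε'i
  have hnε : nε = 1 := by
    have : ((nε : ℤ) : K) = ((1 : ℤ) : K) := by push_cast; rw [← hεn, hεu]
    exact_mod_cast this
  rw [hnε] at hsb
  obtain ⟨n2, r, hrn, hrm, _, hrb, _⟩ := aux_nt K hdeg him (b * ε) (c * ε')
    (cj_mul hcjb hcjε) (hbint.mul hεi) (hcint.mul hε'i)
  have hn2 : n2 = 1 := by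
    have : ((n2 : ℤ) : K) = ((1 : ℤ) : K) := by
      push_cast
      rw [← hrn]
      linear_combination (b * c) * hεu + hbc
    exact_mod_cast this
  rw [hn2] at hrb hrn
  push_cast at hrn
  obtain ⟨nq, mq, hqn, hqm, hqnn, hqb, hqz⟩ := aux_nt K hdeg him q q' hq' hqint hq'int
  -- the key norm computation
  have hkey : 4 * nq = s * t * r - 2 * s ^ 2 + 7 := by
    have hK : ((4 * nq : ℤ) : K) = ((s * t * r - 2 * s ^ 2 + 7 : ℤ) : K) := by
      push_cast
      linear_combination (-4 : K) * hqn
        + (2 * q') * h2q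
        + (ε - 2 * ε' + c * ε' * ((t:ℤ):K)) * h2q'
        + (-((t:ℤ):K) * ((s:ℤ):K)^2 + ε * ((t:ℤ):K) * ((s:ℤ):K) - b * ε * ((t:ℤ):K)^2 * ((s:ℤ):K)
            + b * ε^2 * ((t:ℤ):K)^2 - 2 * ε' * ε * ((t:ℤ):K) + ε' * b * ε * ((t:ℤ):K)^2
            + ε'^2 * ((t:ℤ):K)) * htr
        + (-2 * ((s:ℤ):K) + ((t:ℤ):K)^2 * ((s:ℤ):K) - 2 * ε - ε * ((t:ℤ):K)^2
            - b * ((t:ℤ):K) * ((s:ℤ):K) + b * ε * ((t:ℤ):K) + b * ε * ((t:ℤ):K)^3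
            - b^2 * ε * ((t:ℤ):K)^2 - 2 * ε' + ε' * ((t:ℤ):K)^2 - ε' * b * ((t:ℤ):K)
            - c * ((t:ℤ):K) * ((s:ℤ):K)) * hεs
        + (ε * ((t:ℤ):K)^2 * ((s:ℤ):K) - ε^2 * ((t:ℤ):K)^2) * hbc
        + (9 - 2 * ((t:ℤ):K)^2) * hεu
        + (((t:ℤ):K) * ((s:ℤ):K)) * hrm
        + (-2 : K) * htK
    exact_mod_cast hK
  obtain ⟨hs2, hreq, hnq1⟩ := aux_int_step t s r nq ht2 hsb hrb hkey
  have hs2K : ((s : ℤ) : K) ^ 2 = 1 := by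
    have := congrArg (fun n : ℤ => ((n : ℤ) : K)) hs2; push_cast at this; exact this
  have hrK : ((r : ℤ) : K) = -(((s : ℤ) : K) * ((t : ℤ) : K)) := by
    have := congrArg (fun n : ℤ => ((n : ℤ) : K)) hreq; push_cast at this; exact this
  -- quadratic roots: bε = -s c  or  bε = r + s c
  have I1 : (b * ε) ^ 2 - ((r : ℤ) : K) * (b * ε) + 1 = 0 := by
    linear_combination (b * ε) * hrm - hrn
  have I2 : (-(((s : ℤ) : K)) * c) ^ 2 - ((r : ℤ) : K) * (-(((s : ℤ) : K)) * c) + 1 = 0 := by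
    linear_combination (c * ((s : ℤ) : K)) * hrK + (c * ((s : ℤ) : K) ^ 2) * htr
      - ((s : ℤ) : K) ^ 2 * hbc - hs2K
  have hroot : (b * ε - (-(((s : ℤ) : K)) * c)) *
      (b * ε - ((r : ℤ) : K) + (-(((s : ℤ) : K)) * c)) = 0 := by
    linear_combination I1 - I2
  rcases mul_eq_zero.mp hroot with hcase | hcase
  · -- main branch: bε = -s c, so d = t
    have h1 : b * ε = -(((s : ℤ) : K)) * c := by linear_combination hcase
    have h2 : c * ε' = -(((s : ℤ) : K)) * b :=
      cj_eq (cj_mul hcjb hcjε) (cj_mul (cj_neg (cj_int s)) (cj_symm hcjb)) h1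
    have hε1 : ε = -(((s : ℤ) : K)) * c ^ 2 := by linear_combination c * h1 - ε * hbc
    have hε'1 : ε' = -(((s : ℤ) : K)) * b ^ 2 := by linear_combination b * h2 - ε' * hbc
    have hA : 2 * q = 2 * ((s : ℤ) : K) * ((t : ℤ) : K) * b - 2 * ((s : ℤ) : K) := by
      linear_combination h2q + hε1 + (-2 + c * ((t : ℤ) : K)) * hε'1
        + (-((t : ℤ) : K) * ((s : ℤ) : K) + 2 * b * ((s : ℤ) : K) - c * ((s : ℤ) : K)) * htr
        + (-((s : ℤ) : K) - b * ((t : ℤ) : K) * ((s : ℤ) : K)) * hbc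
        + (-((s : ℤ) : K)) * htK
    have hq2K : q ^ 2 = -(((t : ℤ) : K)) * b := by
      linear_combination (-(1/2 : K) * ((s : ℤ) : K) + (1/2 : K) * b * ((t : ℤ) : K) * ((s : ℤ) : K)
          + (1/2 : K) * q) * hA
        + (b * ((t : ℤ) : K) ^ 2 * ((s : ℤ) : K) ^ 2) * htr
        + (-((t : ℤ) : K) ^ 2 * ((s : ℤ) : K) ^ 2) * hbc
        + (-((s : ℤ) : K) ^ 2 + b * ((t : ℤ) : K) * ((s : ℤ) : K) ^ 2) * htK
        + (-(b * ((t : ℤ) : K))) * hs2K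
    have hcd : c * d = 1 - ((t : ℤ) : K) * b := by linear_combination hq2K - hq
    linear_combination b * hcd - d * hbc - ((t : ℤ) : K) * hb2 - b * htK
  · -- contradiction branch: bε = r + s c
    exfalso
    have h1 : b * ε = ((r : ℤ) : K) + ((s : ℤ) : K) * c := by linear_combination hcase
    have h2 : c * ε' = ((r : ℤ) : K) + ((s : ℤ) : K) * b :=
      cj_eq (cj_mul hcjb hcjε) (cj_add (cj_int r) (cj_mul (cj_int s) (cj_symm hcjb))) h1
    have hε1b : ε = ((r : ℤ) : K) * c + ((s : ℤ) : K) * c ^ 2 := by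
      linear_combination c * h1 - ε * hbc
    have hε'1b : ε' = ((r : ℤ) : K) * b + ((s : ℤ) : K) * b ^ 2 := by
      linear_combination b * h2 - ε' * hbc
    have hcontra : ((s : ℤ) : K) = ((r : ℤ) : K) * ((t : ℤ) : K) - ((s : ℤ) : K) := by
      linear_combination -hεs + hε1b + hε'1b
        + (((r : ℤ) : K) + ((t : ℤ) : K) * ((s : ℤ) : K) + b * ((s : ℤ) : K)
            + c * ((s : ℤ) : K)) * htr
        + (-2 * ((s : ℤ) : K)) * hbc + ((s : ℤ) : K) * htK
    have hZ : s = r * t - s := by exact_mod_cast hcontra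
    exact aux_int_step2 t s r ht2 hs2 hreq hZ

lemma aux_bound (m : ℤ) (h : m ^ 2 ≤ 4) : -2 ≤ m ∧ m ≤ 2 := by
  constructor <;> nlinarith

lemma aux_unit_int (u v : ℤ) (h : u * v = 1) (hu : 0 ≤ u) : u = 1 ∧ v = 1 := by
  rcases Int.isUnit_iff.mp (IsUnit.of_mul_eq_one _ h) with h1 | h1 <;> subst h1 <;> omega

set_option maxHeartbeats 2000000 in
/-- If {a₁, a₂, a₃, a₄} is a Diophantine quadruple with D(-1) in the ring of
integers of an imaginary quadratic field, then aᵢaⱼ is not a square in O_K for i ≠ j. -/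
theorem stmt_2 (K : Subfield ℂ)
    (hdeg : Module.finrank ℚ K = 2) (him : ∃ z : K, (z : ℂ).im ≠ 0)
    (a : Fin 4 → K)
    (hinj : Function.Injective a)
    (ha0 : ∀ i, a i ≠ 0)
    (haint : ∀ i, IsIntegral ℤ (a i))
    (hD : ∀ i j, i ≠ j → ∃ x : K, IsIntegral ℤ x ∧ a i * a j - 1 = x ^ 2) :
    ∀ i j, i ≠ j → ¬∃ x : K, IsIntegral ℤ x ∧ a i * a j = x ^ 2 := by
  intro i j hij hsq
  obtain ⟨x, hxint, hx⟩ := hsq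
  obtain ⟨y, hyint, hy⟩ := hD i j hij
  have cj1 : ((1 : K) : ℂ) = (starRingEnd ℂ) ((1 : K) : ℂ) := by
    rw [show (1 : K) = ((1 : ℤ) : K) by norm_num]; exact cj_int 1
  obtain ⟨x', hx', hx'int⟩ := aux_conj_int K hdeg him x hxint
  obtain ⟨y', hy', hy'int⟩ := aux_conj_int K hdeg him y hyint
  -- Layer 1 : a i * a j = 1
  have huv : (x + y) * (x - y) = 1 := by linear_combination hy - hx
  have hcju : ((x' + y' : K) : ℂ) = (starRingEnd ℂ) ((x + y : K) : ℂ) := cj_add hx' hy'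
  have hcjv : ((x' - y' : K) : ℂ) = (starRingEnd ℂ) ((x - y : K) : ℂ) := cj_sub hx' hy'
  obtain ⟨nu, mu, hun, hum, hunn, hub, huz⟩ := aux_nt K hdeg him (x + y) (x' + y')
    hcju (hxint.add hyint) (hx'int.add hy'int)
  obtain ⟨nv, mv, hvn, hvm, hvnn, hvb, hvz⟩ := aux_nt K hdeg him (x - y) (x' - y')
    hcjv (hxint.sub hyint) (hx'int.sub hy'int)
  have huv' : (x' + y') * (x' - y') = 1 := cj_eq (cj_mul hcju hcjv) cj1 huv
  have hnprod : nu * nv = 1 := by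
    have hK : ((nu * nv : ℤ) : K) = ((1 : ℤ) : K) := by
      push_cast
      linear_combination (-((x - y) * (x' - y'))) * hun - (nu : K) * hvn
        + ((x' + y') * (x' - y')) * huv + huv'
    exact_mod_cast hK
  obtain ⟨hnu, hnv⟩ := aux_unit_int nu nv hnprod hunn
  rw [hnu] at hun hub
  push_cast at hun
  have hu0 : x + y ≠ 0 := by
    intro h; rw [h, zero_mul] at huv; exact zero_ne_one huv
  have hveq : x - y = x' + y' := by
    have h0 : (x + y) * ((x - y) - (x' + y')) = 0 := by linear_combination huv - hun
    rcases mul_eq_zero.mp h0 with h | h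
    · exact absurd h hu0
    · linear_combination h
  have h2x : 2 * x = ((mu : ℤ) : K) := by linear_combination hum + hveq
  have hx2K : x ^ 2 * 4 = ((mu ^ 2 : ℤ) : K) := by
    push_cast
    linear_combination (2 * x + (mu : K)) * h2x
  have hx2rat : (x ^ 2 : K) = (((mu ^ 2 : ℚ) / 4 : ℚ) : K) := by
    push_cast
    push_cast at hx2K
    linear_combination (1 / 4 : K) * hx2K
  obtain ⟨dd, hdd⟩ := aux_rat_int K ((mu ^ 2 : ℚ) / 4) (by rw [← hx2rat]; exact hxint.pow 2)
  have h4dd : 4 * dd = mu ^ 2 := by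
    have h1 : (dd : ℚ) * 4 = (mu : ℚ) ^ 2 := by field_simp at hdd; linarith [hdd]
    have h2 : dd * 4 = mu ^ 2 := by exact_mod_cast h1
    omega
  have hmusq : 0 ≤ mu ^ 2 := sq_nonneg mu
  have hmu2 : mu ^ 2 = 0 ∨ mu ^ 2 = 4 := by omega
  rcases hmu2 with hmu0 | hmu4
  · -- x = 0 : impossible since a i * a j ≠ 0
    have hmu : mu = 0 := by
      have := sq_eq_zero_iff.mp hmu0
      exact this
    rw [hmu] at h2x
    push_cast at h2x
    have hx0 : x = 0 := by
      rcases mul_eq_zero.mp h2x with h | h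
      · exact absurd h two_ne_zero
      · exact h
    rw [hx0] at hx
    rcases mul_eq_zero.mp (by rw [hx]; ring) with h | h
    · exact ha0 i h
    · exact ha0 j h
  -- Layer 2 : a i * a j = 1
  have hone : a i * a j = 1 := by
    have h4 : x ^ 2 * 4 = ((4 : ℤ) : K) := by rw [hx2K, hmu4]
    push_cast at h4
    rw [hx]
    linear_combination (1 / 4 : K) * h4
  obtain ⟨b', hb', hb'int⟩ := aux_conj_int K hdeg him (a i) (haint i)
  obtain ⟨c', hc', hc'int⟩ := aux_conj_int K hdeg him (a j) (haint j)
  obtain ⟨nb, tb, hbn, hbm, hbnn, hbb, hbz⟩ := aux_nt K hdeg him (a i) b' hb' (haint i) hb'int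
  obtain ⟨nc, tc, hcn, hcm, hcnn, hcb, hcz⟩ := aux_nt K hdeg him (a j) c' hc' (haint j) hc'int
  have hcc' : b' * c' = 1 := cj_eq (cj_mul hb' hc') cj1 hone
  have hnbc : nb * nc = 1 := by
    have hK : ((nb * nc : ℤ) : K) = ((1 : ℤ) : K) := by
      push_cast
      linear_combination (-(a j * c')) * hbn - (nb : K) * hcn + (b' * c') * hone + hcc'
    exact_mod_cast hK
  obtain ⟨hnb, hnc⟩ := aux_unit_int nb nc hnbc hbnn
  rw [hnb] at hbn hbb
  push_cast at hbn
  have hb0 : a i ≠ 0 := ha0 i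
  have hcjeq : a j = b' := by
    have h0 : a i * (a j - b') = 0 := by linear_combination hone - hbn
    rcases mul_eq_zero.mp h0 with h | h
    · exact absurd h hb0
    · linear_combination h
  have htrK : a i + a j = ((tb : ℤ) : K) := by rw [hcjeq]; exact hbm
  have hcjb : (a j : ℂ) = (starRingEnd ℂ) ((a i : ℂ)) := by rw [hcjeq]; exact hb'
  -- pick the other two indices
  have hex : ∃ k l : Fin 4, k ≠ l ∧ k ≠ i ∧ k ≠ j ∧ l ≠ i ∧ l ≠ j := by
    have : ∀ i j : Fin 4, i ≠ j → ∃ k l : Fin 4, k ≠ l ∧ k ≠ i ∧ k ≠ j ∧ l ≠ i ∧ l ≠ j := by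
      decide
    exact this i j hij
  obtain ⟨k, l, hkl, hki, hkj, hli, hlj⟩ := hex
  obtain ⟨p, hpint, hpeq⟩ := hD i k (Ne.symm hki)
  obtain ⟨q, hqint, hqeq⟩ := hD j k (Ne.symm hkj)
  obtain ⟨p2, hp2int, hp2eq⟩ := hD i l (Ne.symm hli)
  obtain ⟨q2, hq2int, hq2eq⟩ := hD j l (Ne.symm hlj)
  obtain ⟨htb1, htb2⟩ := aux_bound tb hbb
  interval_cases tb
  · -- tb = -2 : a i = a j
    have hsq0 : (a i - a j) ^ 2 = 0 := by
      push_cast at htrK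
      linear_combination (a i + a j - 2) * htrK - 4 * hone
    exact hij (hinj (sub_eq_zero.mp (sq_eq_zero_iff.mp hsq0)))
  · -- tb = -1
    have hk1 : a k = ((-1 : ℤ) : K) :=
      aux_case_t1 K hdeg him (a i) (a j) (a k) p q (-1) hcjb (haint i) (haint j)
        hpint hqint (by norm_num) hone htrK hpeq.symm hqeq.symm
    have hl1 : a l = ((-1 : ℤ) : K) :=
      aux_case_t1 K hdeg him (a i) (a j) (a l) p2 q2 (-1) hcjb (haint i) (haint j)
        hp2int hq2int (by norm_num) hone htrK hp2eq.symm hq2eq.symm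
    exact hkl (hinj (hk1.trans hl1.symm))
  · -- tb = 0
    have h0 : a i + a j = 0 := by push_cast at htrK; exact htrK
    rcases aux_case_t0 K hdeg him (a i) (a j) (a k) p q hcjb (haint i) (haint j)
      hpint hqint hone h0 hpeq.symm hqeq.symm (ha0 k) with h | h
    · exact hki (hinj h)
    · exact hkj (hinj h)
  · -- tb = 1
    have hk1 : a k = ((1 : ℤ) : K) :=
      aux_case_t1 K hdeg him (a i) (a j) (a k) p q 1 hcjb (haint i) (haint j)
        hpint hqint (by norm_num) hone htrK hpeq.symm hqeq.symm
    have hl1 : a l = ((1 : ℤ) : K) :=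
      aux_case_t1 K hdeg him (a i) (a j) (a l) p2 q2 1 hcjb (haint i) (haint j)
        hp2int hq2int (by norm_num) hone htrK hp2eq.symm hq2eq.symm
    exact hkl (hinj (hk1.trans hl1.symm))
  · -- tb = 2 : a i = a j
    have hsq0 : (a i - a j) ^ 2 = 0 := by
      push_cast at htrK
      linear_combination (a i + a j + 2) * htrK - 4 * hone
    exact hij (hinj (sub_eq_zero.mp (sq_eq_zero_iff.mp hsq0)))
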